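/- For the torus with radii R > r > 0, the energy integrand G(u, v, θ, φ) = 1/(a² + b² + c² − 2ab cos(u − v)) − 1/(r² δ(θ, φ)² + a b δ(u, v)²) (with a = R − r cos θ, b = R − r cos φ, c = r sin θ − r sin φ), which is defined off the measure-zero diagonal set {(u,v,θ,φ) : δ(u,v) = 0 and δ(θ,φ) = 0}, is nonnegative and Lebesgue integrable on [0, 2π]⁴; in particular the tube energy of the torus is finite and nonnegative. -/
import Mathlib


open Real MeasureTheory

/-- Minimal angular distance between two angles in `[0, 2π]`. -/
noncomputable def angDist (x y : ℝ) : ℝ := min |x - y| (2 * Real.pi - |x - y|)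

/-- The energy integrand of the torus of radii `(R, r)`:
`G(u, v, θ, φ) = 1/‖X − Y‖² − 1/d*²(X, Y)` where `X = p(u, θ)`, `Y = p(v, φ)`. -/
noncomputable def torusIntegrand (R r : ℝ) (x : ℝ × ℝ × ℝ × ℝ) : ℝ :=
  let u := x.1; let v := x.2.1; let θ := x.2.2.1; let φ := x.2.2.2
  let a := R - r * Real.cos θ
  let b := R - r * Real.cos φ
  let c := r * Real.sin θ - r * Real.sin φ
  1 / (a ^ 2 + b ^ 2 + c ^ 2 - 2 * a * b * Real.cos (u - v)) -
    1 / (r ^ 2 * angDist θ φ ^ 2 + a * b * angDist u v ^ 2)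

/- auxiliary lemmas -/

lemma cos_angDist (x y : ℝ) : Real.cos (angDist x y) = Real.cos (x - y) := by
  unfold angDist
  rw [min_def]
  split_ifs with h
  · rw [Real.cos_abs]
  · rw [Real.cos_two_pi_sub, Real.cos_abs]

lemma angDist_nonneg {x y : ℝ} (h : |x - y| ≤ 2 * Real.pi) : 0 ≤ angDist x y :=
  le_min (abs_nonneg _) (by linarith)

lemma angDist_le_pi (x y : ℝ) : angDist x y ≤ Real.pi := by
  unfold angDist
  rcases le_total |x - y| Real.pi with h | h
  · exact min_le_of_left_le h
  · exact min_le_of_right_le (by linarith)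

lemma mul_cos_le_sin {x : ℝ} (h0 : 0 ≤ x) (h : x ≤ Real.pi / 2) :
    x * Real.cos x ≤ Real.sin x := by
  rcases h0.eq_or_lt with rfl | hx0
  · simp
  rcases h.eq_or_lt with h | hx
  · rw [h, Real.cos_pi_div_two, Real.sin_pi_div_two]; norm_num
  · have ht := Real.lt_tan hx0 hx
    have hc : 0 < Real.cos x :=
      Real.cos_pos_of_mem_Ioo ⟨by linarith [Real.pi_pos], hx⟩
    rw [Real.tan_eq_sin_div_cos, lt_div_iff₀ hc] at ht
    linarith

/-- Quartic correction bound: `t² − 2(1 − cos t) ≤ t⁴/4` on `[0, π]`. -/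
lemma quart_bound {t : ℝ} (ht : 0 ≤ t) (ht' : t ≤ Real.pi) :
    t ^ 2 - 2 * (1 - Real.cos t) ≤ t ^ 4 / 4 := by
  have h2 : Real.sin (t / 2) ^ 2 = 1 / 2 - Real.cos t / 2 := by
    have h := Real.sin_sq_eq_half_sub (t / 2)
    rw [show 2 * (t / 2) = t by ring] at h
    exact h
  have hs_le : Real.sin (t / 2) ≤ t / 2 := Real.sin_le (by linarith)
  have hs_nonneg : 0 ≤ Real.sin (t / 2) :=
    Real.sin_nonneg_of_nonneg_of_le_pi (by linarith) (by linarith [Real.pi_pos])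
  have hcos : (t / 2) * Real.cos (t / 2) ≤ Real.sin (t / 2) :=
    mul_cos_le_sin (by linarith) (by linarith)
  have h1c : 1 - Real.cos (t / 2) ≤ (t / 2) ^ 2 / 2 := by
    have := Real.one_sub_sq_div_two_le_cos (x := t / 2); linarith
  have key : t / 2 - Real.sin (t / 2) ≤ (t / 2) ^ 3 / 2 := by
    nlinarith [mul_le_mul_of_nonneg_left h1c (show (0:ℝ) ≤ t / 2 by linarith)]
  -- t² − 4 sin²(t/2) = (t − 2 sin)(t + 2 sin) ≤ (t³/4)(2t)
  have hprod : (t - 2 * Real.sin (t / 2)) * (t + 2 * Real.sin (t / 2)) ≤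
      (t ^ 3 / 8) * (2 * t) := by
    apply mul_le_mul (by nlinarith) (by linarith) (by linarith) (by positivity)
  nlinarith [h2, hprod]

lemma jordan_lower {t : ℝ} (ht : 0 ≤ t) (ht' : t ≤ Real.pi) :
    2 * t ^ 2 ≤ Real.pi ^ 2 * (1 - Real.cos t) := by
  have h := Real.cos_le_one_sub_mul_cos_sq (x := t) (by rwa [abs_of_nonneg ht])
  have hπ := Real.pi_pos
  have h' : 2 / Real.pi ^ 2 * t ^ 2 ≤ 1 - Real.cos t := by linarith
  calc 2 * t ^ 2 = Real.pi ^ 2 * (2 / Real.pi ^ 2 * t ^ 2) := by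
        field_simp
      _ ≤ Real.pi ^ 2 * (1 - Real.cos t) :=
        mul_le_mul_of_nonneg_left h' (by positivity)

set_option maxHeartbeats 1600000 in
/-- Pointwise bounds: on the box, the integrand is nonnegative and bounded by
`π² / (16 * min r² (R−r)²)`. -/
lemma torusIntegrand_bounds (R r : ℝ) (hRr : R > r) (hr : r > 0)
    (x : ℝ × ℝ × ℝ × ℝ)
    (hx : x ∈ Set.Icc 0 (2 * Real.pi) ×ˢ Set.Icc 0 (2 * Real.pi) ×ˢ
        Set.Icc 0 (2 * Real.pi) ×ˢ Set.Icc 0 (2 * Real.pi)) :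
    0 ≤ torusIntegrand R r x ∧
      torusIntegrand R r x ≤ Real.pi ^ 2 / (16 * min (r ^ 2) ((R - r) ^ 2)) := by
  obtain ⟨u, v, θ, φ⟩ := x
  simp only [Set.mem_prod, Set.mem_Icc] at hx
  obtain ⟨⟨hu0, hu1⟩, ⟨hv0, hv1⟩, ⟨hθ0, hθ1⟩, ⟨hφ0, hφ1⟩⟩ := hx
  have hπ := Real.pi_pos
  set s := angDist θ φ with hs_def
  set t := angDist u v with ht_def
  have hs0 : 0 ≤ s := angDist_nonneg (by rw [abs_sub_le_iff]; constructor <;> linarith)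
  have ht0 : 0 ≤ t := angDist_nonneg (by rw [abs_sub_le_iff]; constructor <;> linarith)
  have hsπ : s ≤ Real.pi := angDist_le_pi θ φ
  have htπ : t ≤ Real.pi := angDist_le_pi u v
  set a := R - r * Real.cos θ with ha_def
  set b := R - r * Real.cos φ with hb_def
  have ha : R - r ≤ a := by
    have := Real.cos_le_one θ; nlinarith
  have hb : R - r ≤ b := by
    have := Real.cos_le_one φ; nlinarith
  have hab : (R - r) ^ 2 ≤ a * b := by nlinarith
  have hab0 : 0 < a * b := lt_of_lt_of_le (pow_pos (sub_pos.2 hRr) 2) hab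
  set A := 2 * r ^ 2 * (1 - Real.cos s) + 2 * (a * b) * (1 - Real.cos t) with hA_def
  set B := r ^ 2 * s ^ 2 + (a * b) * t ^ 2 with hB_def
  set m := min (r ^ 2) ((R - r) ^ 2) with hm_def
  have hm : 0 < m := lt_min (pow_pos hr 2) (pow_pos (sub_pos.2 hRr) 2)
  have hmr : m ≤ r ^ 2 := min_le_left _ _
  have hmab : m ≤ a * b := le_trans (min_le_right _ _) hab
  have hG : torusIntegrand R r (u, v, θ, φ) = 1 / A - 1 / B := by
    rw [hA_def, hB_def, hs_def, ht_def, ha_def, hb_def]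
    simp only [torusIntegrand]
    congr 2
    rw [cos_angDist θ φ, cos_angDist u v]
    linear_combination 2 * r ^ 2 * Real.cos_sub θ φ + (r ^ 2 : ℝ) * Real.sin_sq_add_cos_sq θ +
      r ^ 2 * Real.sin_sq_add_cos_sq φ
  clear_value s t a b A B m
  rw [hG]
  have hqs := quart_bound hs0 hsπ
  have hqt := quart_bound ht0 htπ
  have hjs := jordan_lower hs0 hsπ
  have hjt := jordan_lower ht0 htπ
  have hcs : 1 - Real.cos s ≤ s ^ 2 / 2 := by
    have := Real.one_sub_sq_div_two_le_cos (x := s); linarith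
  have hct : 1 - Real.cos t ≤ t ^ 2 / 2 := by
    have := Real.one_sub_sq_div_two_le_cos (x := t); linarith
  have hAB : A ≤ B := by
    have h1 := mul_le_mul_of_nonneg_left hcs (show (0:ℝ) ≤ 2 * r ^ 2 by positivity)
    have h2 := mul_le_mul_of_nonneg_left hct
      (show (0:ℝ) ≤ 2 * (a * b) by linarith)
    rw [hA_def, hB_def]
    linarith
  by_cases hd : s = 0 ∧ t = 0
  · obtain ⟨hds, hdt⟩ := hd
    have hA0 : A = 0 := by rw [hA_def, hds, hdt]; simp
    have hB0 : B = 0 := by rw [hB_def, hds, hdt]; ring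
    rw [hA0, hB0]
    have hC : (0:ℝ) ≤ Real.pi ^ 2 / (16 * m) := div_nonneg (by positivity) (by linarith)
    refine ⟨by norm_num, ?_⟩
    simpa using hC
  · -- off-diagonal: B > 0
    have hst : 0 < s ^ 2 + t ^ 2 := by
      rcases (not_and_or.mp hd) with h | h
      · have hs : 0 < s := lt_of_le_of_ne hs0 (Ne.symm h); nlinarith
      · have ht : 0 < t := lt_of_le_of_ne ht0 (Ne.symm h); nlinarith
    have hmB : m * (s ^ 2 + t ^ 2) ≤ B := by
      have e1 := mul_le_mul_of_nonneg_right hmr (sq_nonneg s)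
      have e2 := mul_le_mul_of_nonneg_right hmab (sq_nonneg t)
      rw [hB_def]; nlinarith
    have hB0 : 0 < B := lt_of_lt_of_le (mul_pos hm hst) hmB
    have hπA : 4 * B ≤ Real.pi ^ 2 * A := by
      have j1 := mul_le_mul_of_nonneg_left hjs (show (0:ℝ) ≤ 2 * r ^ 2 by positivity)
      have j2 := mul_le_mul_of_nonneg_left hjt (show (0:ℝ) ≤ 2 * (a * b) by linarith)
      rw [hA_def, hB_def]
      nlinarith
    have hA0 : 0 < A := by
      have h4B : 0 < 4 * B := by linarith
      nlinarith [sq_nonneg Real.pi]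
    constructor
    · have := one_div_le_one_div_of_le hA0 hAB
      linarith
    · -- upper bound
      have hBA : B - A ≤ 1 / 4 * (s ^ 2 + t ^ 2) * B := by
        have h1 := mul_le_mul_of_nonneg_left hqs (show (0:ℝ) ≤ r ^ 2 by positivity)
        have h2 := mul_le_mul_of_nonneg_left hqt (le_of_lt hab0)
        have h3 : r ^ 2 * (s ^ 4 / 4) ≤ 1 / 4 * (s ^ 2 + t ^ 2) * (r ^ 2 * s ^ 2) := by
          nlinarith [sq_nonneg (r * s * t)]
        have h4 : (a * b) * (t ^ 4 / 4) ≤ 1 / 4 * (s ^ 2 + t ^ 2) * ((a * b) * t ^ 2) := by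
          nlinarith [mul_nonneg (le_of_lt hab0) (sq_nonneg (s * t))]
        rw [hA_def, hB_def]
        linarith
      rw [div_sub_div _ _ (ne_of_gt hA0) (ne_of_gt hB0),
        div_le_div_iff₀ (mul_pos hA0 hB0) (show (0:ℝ) < 16 * m by linarith)]
      have e1 : (B - A) * (16 * m) ≤ 4 * m * (s ^ 2 + t ^ 2) * B := by
        have := mul_le_mul_of_nonneg_right hBA (show (0:ℝ) ≤ 16 * m by linarith)
        nlinarith
      have hA4 : 4 * (m * (s ^ 2 + t ^ 2)) ≤ Real.pi ^ 2 * A := by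
        have := mul_le_mul_of_nonneg_left hmB (show (0:ℝ) ≤ 4 by norm_num)
        linarith
      have e2 : 4 * m * (s ^ 2 + t ^ 2) * B ≤ Real.pi ^ 2 * (A * B) := by
        have := mul_le_mul_of_nonneg_right hA4 (le_of_lt hB0)
        nlinarith
      nlinarith

lemma torusIntegrand_measurable (R r : ℝ) : Measurable (torusIntegrand R r) := by
  unfold torusIntegrand angDist
  fun_prop

/-- For the torus with radii `R > r > 0`, the energy integrand is
nonnegative off the diagonal set `{δ(u,v) = 0 ∧ δ(θ,φ) = 0}` and Lebesgue integrable
on `[0, 2π]⁴`; in particular the tube energy of the torus is finite and nonnegative. -/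
theorem torus_energy_finite_nonneg (R r : ℝ) (hRr : R > r) (hr : r > 0) :
    (∀ x : ℝ × ℝ × ℝ × ℝ,
        x ∈ Set.Icc 0 (2 * Real.pi) ×ˢ Set.Icc 0 (2 * Real.pi) ×ˢ
            Set.Icc 0 (2 * Real.pi) ×ˢ Set.Icc 0 (2 * Real.pi) →
        ¬(angDist x.1 x.2.1 = 0 ∧ angDist x.2.2.1 x.2.2.2 = 0) →
        0 ≤ torusIntegrand R r x) ∧
      IntegrableOn (torusIntegrand R r)
        (Set.Icc 0 (2 * Real.pi) ×ˢ Set.Icc 0 (2 * Real.pi) ×ˢ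
          Set.Icc 0 (2 * Real.pi) ×ˢ Set.Icc 0 (2 * Real.pi)) ∧
      0 ≤ ∫ x in Set.Icc 0 (2 * Real.pi) ×ˢ Set.Icc 0 (2 * Real.pi) ×ˢ
            Set.Icc 0 (2 * Real.pi) ×ˢ Set.Icc 0 (2 * Real.pi),
          torusIntegrand R r x := by
  set S := Set.Icc (0:ℝ) (2 * Real.pi) ×ˢ Set.Icc (0:ℝ) (2 * Real.pi) ×ˢ
      Set.Icc (0:ℝ) (2 * Real.pi) ×ˢ Set.Icc (0:ℝ) (2 * Real.pi) with hS_def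
  have hS_meas : MeasurableSet S :=
    measurableSet_Icc.prod (measurableSet_Icc.prod (measurableSet_Icc.prod measurableSet_Icc))
  have hS_fin : volume S ≠ ⊤ :=
    ((isCompact_Icc.prod (isCompact_Icc.prod
      (isCompact_Icc.prod isCompact_Icc))).measure_lt_top).ne
  refine ⟨fun x hx _ => (torusIntegrand_bounds R r hRr hr x hx).1, ?_, ?_⟩
  · refine Measure.integrableOn_of_bounded hS_fin
      (torusIntegrand_measurable R r).aestronglyMeasurable
      (M := Real.pi ^ 2 / (16 * min (r ^ 2) ((R - r) ^ 2))) ?_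
    rw [ae_restrict_iff' hS_meas]
    refine ae_of_all _ fun x hx => ?_
    obtain ⟨h1, h2⟩ := torusIntegrand_bounds R r hRr hr x hx
    rw [Real.norm_eq_abs, abs_of_nonneg h1]
    exact h2
  · exact setIntegral_nonneg hS_meas fun x hx => (torusIntegrand_bounds R r hRr hr x hx).1
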